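/- Let P = ERM^c with c ≥ m/N. For any v_I ∈ ℝ≥0^m and v_{-I} ∈ ℝ≥0^{N−m}, let v̄_I ∈ ℝ≥0^m be any m values satisfying min v̄_I ≥ max v_{-I}. Then P(v̄_I, v_{-I}) ≥ P(v_I, v_{-I}). -/

import Mathlib

open MeasureTheory ProbabilityTheory Filter

noncomputable section

noncomputable def sortedVal {N : ℕ} (v : Fin N → ℝ) (i : ℕ) : ℝ :=
  (Multiset.sort (↑(List.ofFn v)) (· ≤ ·)).getD (N - i) 0

noncomputable def argmaxIdx (S : Finset ℕ) (f : ℕ → ℝ) : ℕ :=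
  WithBot.unbotD 0 ((S.filter fun i => ∀ j ∈ S, f j ≤ f i).max)

noncomputable def ERMIdx (c : ℝ) {N : ℕ} (v : Fin N → ℝ) : ℕ :=
  argmaxIdx ((Finset.Icc 1 N).filter fun i => c * N < (i : ℝ))
    (fun i => (i : ℝ) * sortedVal v i)

noncomputable def ERM (c : ℝ) {N : ℕ} (v : Fin N → ℝ) : ℝ :=
  sortedVal v (ERMIdx c v)

/-- Incentive-awareness measure `δ_I(v_I, v_{-I})` of a price function `P`,
where the coordinates in `I` are the manipulable ones and `v` records both
`v_I` (on `I`) and `v_{-I}` (off `I`). -/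
noncomputable def deltaIdx {N : ℕ} (P : (Fin N → ℝ) → ℝ) (I : Finset (Fin N))
    (v : Fin N → ℝ) : ℝ :=
  1 - sInf {p : ℝ | ∃ b : Fin N → ℝ, (∀ j, 0 ≤ b j) ∧
      p = P fun j => if j ∈ I then b j else v j} / P v

/-- Worst-case incentive-awareness measure `δ_m^worst(v_{-I})`
(only the coordinates of `v` off `I` matter). -/
noncomputable def deltaWorstIdx {N : ℕ} (P : (Fin N → ℝ) → ℝ) (I : Finset (Fin N))
    (v : Fin N → ℝ) : ℝ :=
  sSup {x : ℝ | ∃ u : Fin N → ℝ, (∀ j, 0 ≤ u j) ∧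
      x = deltaIdx P I fun j => if j ∈ I then u j else v j}

/-- `Δ_{N,m}^worst` with explicit index set `I`:
expectation of `δ^worst(v_{-I})` over i.i.d. samples from `μ`. -/
noncomputable def DeltaWorstIdx {N : ℕ} (μ : Measure ℝ) (P : (Fin N → ℝ) → ℝ)
    (I : Finset (Fin N)) : ℝ :=
  ∫ v : Fin N → ℝ, deltaWorstIdx P I v ∂(Measure.pi fun _ => μ)

/-- The index set `{0, …, m-1}` inside `Fin N`. -/
noncomputable def firstIdx (N m : ℕ) : Finset (Fin N) :=
  Finset.univ.filter fun j => (j : ℕ) < m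

/-- The worst-case incentive-awareness measure `Δ_{N,m}^worst`. -/
noncomputable def DeltaWorst {N : ℕ} (μ : Measure ℝ) (P : (Fin N → ℝ) → ℝ) (m : ℕ) : ℝ :=
  DeltaWorstIdx μ P (firstIdx N m)

/-- Append-based incentive-awareness measure `δ_I(v_I, v_{-I})` for `P = ERM^c`. -/
noncomputable def deltaIA (c : ℝ) {m n : ℕ} (vI : Fin m → ℝ) (w : Fin n → ℝ) : ℝ :=
  1 - sInf {p : ℝ | ∃ b : Fin m → ℝ, (∀ i, 0 ≤ b i) ∧ p = ERM c (Fin.append b w)} /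
      ERM c (Fin.append vI w)

/-- Append-based worst-case incentive-awareness measure `δ_m^worst(v_{-I})` for `P = ERM^c`. -/
noncomputable def deltaWorstA (c : ℝ) (m : ℕ) {n : ℕ} (w : Fin n → ℝ) : ℝ :=
  sSup {x : ℝ | ∃ vI : Fin m → ℝ, (∀ i, 0 ≤ vI i) ∧ x = deltaIA c vI w}

/-- The index `k* = argmax_{i > cN} i·v_i` selected by `ERM^c` when the top `m`
of the `N` samples are fixed to `+∞` and the remaining `N - m` samples are `w`
(so `v_i` for `i > m` is the `(i-m)`-th largest entry of `w`);
ties are broken towards the larger index. -/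
noncomputable def kStarInf (c : ℝ) (N m : ℕ) {n : ℕ} (w : Fin n → ℝ) : ℕ :=
  argmaxIdx ((Finset.Icc (m + 1) N).filter fun i => c * N < (i : ℝ))
    (fun i => (i : ℝ) * sortedVal w (i - m))

/-- Interim utility `u^K(v, p)` of a bidder with value `v` in a second price
auction with reserve price `p` among `K` i.i.d. bidders from `μ`. -/
noncomputable def uK (μ : Measure ℝ) (K : ℕ) (v p : ℝ) : ℝ :=
  ∫ x : Fin (K - 1) → ℝ, max (v - (List.ofFn x).foldr max p) 0 ∂(Measure.pi fun _ => μ)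

/-- A distribution on `[0, ∞)` has monotone hazard rate (MHR) if it has a density `f`
whose hazard rate `f v / (1 - F v)` is non-decreasing on its support. -/
def IsMHR (μ : Measure ℝ) : Prop :=
  ∃ f : ℝ → ℝ, (∀ x, 0 ≤ f x) ∧ (∀ x, x < 0 → f x = 0) ∧
    μ = MeasureTheory.volume.withDensity (fun x => ENNReal.ofReal (f x)) ∧
    MonotoneOn (fun v => f v / (1 - ProbabilityTheory.cdf μ v)) (Function.support f)

/-- `α`-strong regularity: a density `f`, positive on an interval support contained
in `[0, ∞)`, whose virtual value `φ(x) = x - (1 - F x)/f x` satisfies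
`φ(y) - φ(x) ≥ α (y - x)` whenever `x < y` on the support. -/
def IsAlphaStronglyRegular (α : ℝ) (μ : Measure ℝ) : Prop :=
  ∃ f : ℝ → ℝ, (∀ x, 0 ≤ f x) ∧
    μ = MeasureTheory.volume.withDensity (fun x => ENNReal.ofReal (f x)) ∧
    Set.OrdConnected (Function.support f) ∧
    (∀ x ∈ Function.support f, 0 ≤ x) ∧
    (∀ x ∈ Function.support f, ∀ y ∈ Function.support f, x < y →
      α * (y - x) ≤
        (y - (1 - ProbabilityTheory.cdf μ y) / f y) -
          (x - (1 - ProbabilityTheory.cdf μ x) / f x))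

end


private lemma arith_key {A B M R R' : ℝ} (h0 : 0 ≤ M) (h1 : R ≤ R') (h2 : R' ≤ M)
    (h4 : 0 ≤ A - R) (h5 : A - R + M + 1 ≤ B) :
    A * B ≤ (B - M + R') * (A - R + M) := by
  have hx : 0 ≤ (M - R) * (B - (A - R + M)) :=
    mul_nonneg (by linarith) (by linarith)
  have hy : 0 ≤ (R' - R) * (A - R + M) :=
    mul_nonneg (by linarith) (by linarith)
  nlinarith [hx, hy]

private lemma argmaxIdx_spec (S : Finset ℕ) (f : ℕ → ℝ) (hS : S.Nonempty) :
    argmaxIdx S f ∈ S ∧ (∀ j ∈ S, f j ≤ f (argmaxIdx S f)) ∧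
      ∀ j ∈ S, argmaxIdx S f < j → f j < f (argmaxIdx S f) := by
  classical
  obtain ⟨x, hx, hmax⟩ := S.exists_max_image f hS
  set T := S.filter fun i => ∀ j ∈ S, f j ≤ f i with hT
  have hTne : T.Nonempty := ⟨x, Finset.mem_filter.mpr ⟨hx, hmax⟩⟩
  have hval : argmaxIdx S f = T.max' hTne := by
    rw [argmaxIdx]
    rw [show (S.filter fun i => ∀ j ∈ S, f j ≤ f i) = T from rfl]
    rw [← Finset.coe_max' hTne]
    rfl
  have hmem := Finset.max'_mem T hTne
  rw [hval]
  obtain ⟨hmS, hmprop⟩ := Finset.mem_filter.mp hmem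
  refine ⟨hmS, hmprop, ?_⟩
  intro j hj hlt
  by_contra hge
  push_neg at hge
  have hjT : j ∈ T := Finset.mem_filter.mpr ⟨hj, fun j' hj' => le_trans (hmprop j' hj') hge⟩
  exact absurd (Finset.le_max' T j hjT) (not_le.mpr hlt)


private lemma sortedList_length {N : ℕ} (v : Fin N → ℝ) :
    (Multiset.sort (↑(List.ofFn v) : Multiset ℝ) (· ≤ ·)).length = N := by
  rw [Multiset.length_sort]; simp

private lemma sortedList_perm {N : ℕ} (v : Fin N → ℝ) :
    (List.ofFn v).Perm (Multiset.sort (↑(List.ofFn v) : Multiset ℝ) (· ≤ ·)) := by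
  rw [← Multiset.coe_eq_coe, Multiset.sort_eq]

private lemma sorted_getElem_le {L : List ℝ} (hL : L.Pairwise (· ≤ ·)) {i j : ℕ}
    (hij : i ≤ j) (hj : j < L.length) : L[i]'(lt_of_le_of_lt hij hj) ≤ L[j] := by
  rcases eq_or_lt_of_le hij with rfl | h
  · exact le_refl _
  · exact List.pairwise_iff_getElem.mp hL i j _ hj h

private lemma countP_ge_of_sorted {L : List ℝ} (hL : L.Pairwise (· ≤ ·)) {pos : ℕ}
    (hpos : pos < L.length) {t : ℝ} (ht : t ≤ L[pos]) :
    L.length - pos ≤ L.countP (fun x => decide (t ≤ x)) := by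
  have hsplit : L.countP (fun x => decide (t ≤ x)) =
      (L.take pos).countP (fun x => decide (t ≤ x)) +
      (L.drop pos).countP (fun x => decide (t ≤ x)) := by
    conv_lhs => rw [← List.take_append_drop pos L]
    rw [List.countP_append]
  have hdrop : (L.drop pos).countP (fun x => decide (t ≤ x)) = (L.drop pos).length := by
    rw [List.countP_eq_length]
    intro a ha
    obtain ⟨j, hj, rfl⟩ := List.mem_iff_getElem.mp ha
    rw [List.getElem_drop]
    have hlt : pos + j < L.length := by
      have := hj; rw [List.length_drop] at this; omega
    simpa using le_trans ht (sorted_getElem_le hL (Nat.le_add_right pos j) hlt)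
  rw [hsplit, hdrop, List.length_drop]
  omega

private lemma le_of_countP_sorted {L : List ℝ} (hL : L.Pairwise (· ≤ ·)) {pos : ℕ}
    (hpos : pos < L.length) {t : ℝ}
    (h : L.length - pos ≤ L.countP (fun x => decide (t ≤ x))) : t ≤ L[pos] := by
  by_contra hlt
  push_neg at hlt
  have hsplit : L.countP (fun x => decide (t ≤ x)) =
      (L.take (pos+1)).countP (fun x => decide (t ≤ x)) +
      (L.drop (pos+1)).countP (fun x => decide (t ≤ x)) := by
    conv_lhs => rw [← List.take_append_drop (pos+1) L]
    rw [List.countP_append]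
  have htake : (L.take (pos+1)).countP (fun x => decide (t ≤ x)) = 0 := by
    rw [List.countP_eq_zero]
    intro a ha
    obtain ⟨j, hj, rfl⟩ := List.mem_iff_getElem.mp ha
    rw [List.getElem_take]
    have hjle : j ≤ pos := by
      have := hj; rw [List.length_take] at this; omega
    simp only [decide_eq_true_eq]
    intro hta
    exact absurd (le_trans hta (sorted_getElem_le hL hjle hpos)) (not_le.mpr hlt)
  have hdle := List.countP_le_length (p := fun x => decide (t ≤ x)) (l := L.drop (pos+1))
  rw [List.length_drop] at hdle
  omega

private lemma sortedVal_eq_getElem {N : ℕ} (v : Fin N → ℝ) {i : ℕ} (h1 : 1 ≤ i) (h2 : i ≤ N) :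
    sortedVal v i = (Multiset.sort (↑(List.ofFn v) : Multiset ℝ) (· ≤ ·))[N - i]'
      (by rw [sortedList_length]; omega) := by
  exact List.getD_eq_getElem _ 0 _

private lemma sortedVal_nonneg {N : ℕ} (v : Fin N → ℝ) (hv : ∀ j, 0 ≤ v j) (i : ℕ) :
    0 ≤ sortedVal v i := by
  unfold sortedVal
  set L := Multiset.sort (↑(List.ofFn v) : Multiset ℝ) (· ≤ ·) with hLdef
  by_cases h : N - i < L.length
  · rw [List.getD_eq_getElem _ 0 h]
    have hmem : L[N-i] ∈ L := List.getElem_mem _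
    have hr : L[N-i] ∈ Set.range v := List.mem_ofFn.mp ((sortedList_perm v).mem_iff.mpr hmem)
    obtain ⟨j, hj⟩ := hr
    exact hj ▸ hv j
  · rw [List.getD_eq_default _ 0 (not_lt.mp h)]

private lemma sortedVal_anti {N : ℕ} (v : Fin N → ℝ) {i j : ℕ} (h1 : 1 ≤ i) (hij : i ≤ j)
    (hj : j ≤ N) : sortedVal v j ≤ sortedVal v i := by
  rw [sortedVal_eq_getElem v (le_trans h1 hij) hj, sortedVal_eq_getElem v h1 (le_trans hij hj)]
  exact sorted_getElem_le (Multiset.pairwise_sort _ _) (by omega)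
    (by rw [sortedList_length]; omega)

private lemma le_sortedVal_of_countP {N : ℕ} (v : Fin N → ℝ) {t : ℝ} {i : ℕ} (h1 : 1 ≤ i)
    (h : i ≤ (List.ofFn v).countP (fun x => decide (t ≤ x))) : t ≤ sortedVal v i := by
  have hiN : i ≤ N := le_trans h (by simpa using List.countP_le_length (l := List.ofFn v))
  rw [sortedVal_eq_getElem v h1 hiN]
  apply le_of_countP_sorted (Multiset.pairwise_sort _ _) (by rw [sortedList_length]; omega)
  rw [(sortedList_perm v).countP_eq (fun x => decide (t ≤ x))] at h
  rw [sortedList_length]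
  omega

private lemma countP_sortedVal_ge {N : ℕ} (v : Fin N → ℝ) {i : ℕ} (h1 : 1 ≤ i) (h2 : i ≤ N) :
    i ≤ (List.ofFn v).countP (fun x => decide (sortedVal v i ≤ x)) := by
  rw [(sortedList_perm v).countP_eq]
  rw [sortedVal_eq_getElem v h1 h2]
  have := countP_ge_of_sorted (Multiset.pairwise_sort
      (↑(List.ofFn v) : Multiset ℝ) (· ≤ ·)) (pos := N - i)
      (by rw [sortedList_length]; omega) (le_refl _)
  have hlen := sortedList_length v
  omega


private lemma sortedVal_append_top {m n : ℕ} (vbar : Fin m → ℝ) (w : Fin n → ℝ)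
    (h : ∀ i j, w j ≤ vbar i) {i : ℕ} (him : m < i) (hiN : i ≤ m + n) :
    sortedVal (Fin.append vbar w) i = sortedVal w (i - m) := by
  have key : Multiset.sort (↑(List.ofFn (Fin.append vbar w)) : Multiset ℝ) (· ≤ ·) =
      Multiset.sort (↑(List.ofFn w) : Multiset ℝ) (· ≤ ·) ++
      Multiset.sort (↑(List.ofFn vbar) : Multiset ℝ) (· ≤ ·) := by
    apply List.Perm.eq_of_pairwise' (r := (· ≤ ·))
    rotate_right
    · rw [← Multiset.coe_eq_coe]
      simp only [Multiset.sort_eq, List.ofFn_fin_append, ← Multiset.coe_add]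
      rw [add_comm]
    · exact Multiset.pairwise_sort _ _
    · rw [List.pairwise_append]
      refine ⟨Multiset.pairwise_sort _ _, Multiset.pairwise_sort _ _, ?_⟩
      intro a ha b hb
      have ha' : a ∈ List.ofFn w := (sortedList_perm w).mem_iff.mpr ha
      have hb' : b ∈ List.ofFn vbar := (sortedList_perm vbar).mem_iff.mpr hb
      obtain ⟨ja, rfl⟩ := List.mem_ofFn.mp ha'
      obtain ⟨jb, rfl⟩ := List.mem_ofFn.mp hb'
      exact h jb ja
  unfold sortedVal
  rw [key]
  have hlen : (Multiset.sort (↑(List.ofFn w) : Multiset ℝ) (· ≤ ·)).length = n :=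
    sortedList_length w
  have hidx : m + n - i < n := by omega
  rw [List.getD_append _ _ _ _ (by omega)]
  congr 1
  omega

/-- Claim 1 in the paper. Let `P = ERM^c` with `c ≥ m/N`
(`N = m + n` total samples, `0 ≤ c < 1`). For any nonnegative `vI`, `w = v_{-I}`,
and any `vbar` with `min vbar ≥ max w`, we have `P(vbar, w) ≥ P(vI, w)`. -/
theorem ERM_monotone_top (m n : ℕ) (c : ℝ)
    (hc : (m : ℝ) / (m + n) ≤ c) (hc1 : c < 1)
    (vI : Fin m → ℝ) (hvI : ∀ i, 0 ≤ vI i)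
    (w : Fin n → ℝ) (hw : ∀ j, 0 ≤ w j)
    (vbar : Fin m → ℝ) (hvbar : ∀ i j, w j ≤ vbar i) :
    ERM c (Fin.append vI w) ≤ ERM c (Fin.append vbar w) := by
  rcases Nat.eq_zero_or_pos m with hm0 | hm
  · subst hm0
    have hvv : vI = vbar := funext fun i => i.elim0
    rw [hvv]
  have hn : 0 < n := by
    rcases Nat.eq_zero_or_pos n with hn0 | hn
    · subst hn0
      rw [Nat.cast_zero, add_zero, div_self (Nat.cast_ne_zero.mpr (by omega))] at hc
      linarith
    · exact hn
  simp only [ERM, ERMIdx]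
  set N := m + n with hNdef
  have hN0 : 0 < N := by omega
  have hNR : (0:ℝ) < (N:ℝ) := by exact_mod_cast hN0
  have hmcN : (m : ℝ) ≤ c * N := by
    have hc' : (m : ℝ) / N ≤ c := by
      rwa [show ((m:ℝ) + n) = (N:ℝ) by rw [hNdef]; push_cast; ring] at hc
    rw [div_le_iff₀ hNR] at hc'
    linarith
  have hcNN : c * N < N := by nlinarith
  set va := Fin.append vI w with hvadef
  set vb := Fin.append vbar w with hvbdef
  set S : Finset ℕ := (Finset.Icc 1 N).filter (fun i => c * (N:ℝ) < (i:ℝ)) with hSdef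
  have hSmem : ∀ i : ℕ, i ∈ S ↔ (1 ≤ i ∧ i ≤ N ∧ c * N < (i:ℝ)) := by
    intro i
    simp [hSdef, Finset.mem_filter, Finset.mem_Icc, and_assoc]
  have hSne : S.Nonempty := ⟨N, (hSmem N).mpr ⟨by omega, le_refl _, hcNN⟩⟩
  set k := argmaxIdx S (fun i => (i:ℝ) * sortedVal va i) with hkdef
  set k' := argmaxIdx S (fun i => (i:ℝ) * sortedVal vb i) with hk'def
  obtain ⟨hkS, hkmax, hkstr⟩ := argmaxIdx_spec S (fun i => (i:ℝ) * sortedVal va i) hSne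
  obtain ⟨hk'S, hk'max, _⟩ := argmaxIdx_spec S (fun i => (i:ℝ) * sortedVal vb i) hSne
  rw [← hkdef] at hkS hkmax hkstr
  rw [← hk'def] at hk'S hk'max
  obtain ⟨hk1, hkN, hkc⟩ := (hSmem k).mp hkS
  obtain ⟨hk'1, hk'N, hk'c⟩ := (hSmem k').mp hk'S
  have hmk : m < k := by
    have : (m:ℝ) < (k:ℝ) := lt_of_le_of_lt hmcN hkc
    exact_mod_cast this
  have hmk' : m < k' := by
    have : (m:ℝ) < (k':ℝ) := lt_of_le_of_lt hmcN hk'c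
    exact_mod_cast this
  have hva0 : ∀ j, 0 ≤ va j := by
    intro j
    refine Fin.addCases (motive := fun j => 0 ≤ va j) (fun i => ?_) (fun i => ?_) j
    · show 0 ≤ Fin.append vI w (Fin.castAdd n i)
      rw [Fin.append_left]; exact hvI i
    · show 0 ≤ Fin.append vI w (Fin.natAdd m i)
      rw [Fin.append_right]; exact hw i
  have hvb0 : ∀ j, 0 ≤ vb j := by
    intro j
    refine Fin.addCases (motive := fun j => 0 ≤ vb j) (fun i => ?_) (fun i => ?_) j
    · show 0 ≤ Fin.append vbar w (Fin.castAdd n i)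
      rw [Fin.append_left]; exact le_trans (hw ⟨0, hn⟩) (hvbar i ⟨0, hn⟩)
    · show 0 ≤ Fin.append vbar w (Fin.natAdd m i)
      rw [Fin.append_right]; exact hw i
  set t := sortedVal va k with htdef
  have ht0 : 0 ≤ t := sortedVal_nonneg va hva0 k
  have hofn : List.ofFn va = List.ofFn vI ++ List.ofFn w := by
    rw [hvadef]; exact List.ofFn_fin_append vI w
  set rI := (List.ofFn vI).countP (fun x => decide (t ≤ x)) with hrIdef
  have hrIm : rI ≤ m := by
    have := List.countP_le_length (p := fun x => decide (t ≤ x)) (l := List.ofFn vI)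
    simpa using this
  have hcount : k ≤ rI + (List.ofFn w).countP (fun x => decide (t ≤ x)) := by
    have h := countP_sortedVal_ge va hk1 hkN
    rwa [hofn, List.countP_append] at h
  have hcWn : (List.ofFn w).countP (fun x => decide (t ≤ x)) ≤ n := by
    have := List.countP_le_length (p := fun x => decide (t ≤ x)) (l := List.ofFn w)
    simpa using this
  have htw : t ≤ sortedVal w (k - rI) :=
    le_sortedVal_of_countP w (by omega) (by omega)
  set j := k - rI + m with hjdef
  have hjN : j ≤ N := by omega
  have hkj : k ≤ j := by omega
  have hjS : j ∈ S := (hSmem j).mpr ⟨by omega, hjN,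
    lt_of_lt_of_le hkc (by exact_mod_cast hkj)⟩
  have hbj : sortedVal vb j = sortedVal w (k - rI) := by
    rw [hvbdef, sortedVal_append_top vbar w hvbar (by omega) hjN]
    congr 1
    omega
  rcases le_or_gt k' j with hcase | hcase
  · calc t ≤ sortedVal w (k - rI) := htw
      _ = sortedVal vb j := hbj.symm
      _ ≤ sortedVal vb k' := sortedVal_anti vb hk'1 hcase hjN
  · by_contra hcon
    push_neg at hcon
    set u := sortedVal vb k' with hudef
    have hu0 : 0 ≤ u := sortedVal_nonneg vb hvb0 k'
    have huw : u = sortedVal w (k' - m) := by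
      rw [hudef, hvbdef, sortedVal_append_top vbar w hvbar hmk' hk'N]
    set r' := (List.ofFn vI).countP (fun x => decide (u ≤ x)) with hr'def
    have hrr' : rI ≤ r' := by
      apply List.countP_mono_left
      intro x _ hx
      simp only [decide_eq_true_eq] at hx ⊢
      linarith
    have hr'm : r' ≤ m := by
      have := List.countP_le_length (p := fun x => decide (u ≤ x)) (l := List.ofFn vI)
      simpa using this
    have hcw' : k' - m ≤ (List.ofFn w).countP (fun x => decide (u ≤ x)) := by
      have h := countP_sortedVal_ge w (i := k' - m) (by omega) (by omega)
      rwa [← huw] at h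
    set q := k' - m + r' with hqdef
    have hqk : k < q := by omega
    have hqN : q ≤ N := by omega
    have hqS : q ∈ S := (hSmem q).mpr ⟨by omega, hqN,
      lt_trans hkc (by exact_mod_cast hqk)⟩
    have huq : u ≤ sortedVal va q := by
      apply le_sortedVal_of_countP va (by omega)
      rw [hofn, List.countP_append]
      omega
    have hstrict := hkstr q hqS hqk
    have hjle := hk'max j hjS
    have hjt : (j:ℝ) * t ≤ (k':ℝ) * u := by
      calc (j:ℝ) * t ≤ (j:ℝ) * sortedVal vb j := by
            rw [hbj]
            exact mul_le_mul_of_nonneg_left htw (Nat.cast_nonneg j)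
        _ ≤ (k':ℝ) * u := hjle
    have hqjR : (k:ℝ) * (k':ℝ) ≤ (q:ℝ) * (j:ℝ) := by
      have hqR : (q:ℝ) = (k':ℝ) - m + r' := by
        rw [hqdef]
        push_cast [Nat.cast_sub (le_of_lt hmk')]
        ring
      have hjR : (j:ℝ) = (k:ℝ) - rI + m := by
        rw [hjdef]
        push_cast [Nat.cast_sub (by omega : rI ≤ k)]
        ring
      have h1 : (0:ℝ) ≤ (m:ℝ) - r' := by
        have : (r':ℝ) ≤ (m:ℝ) := by exact_mod_cast hr'm
        linarith
      have h2 : (0:ℝ) ≤ (r':ℝ) - rI := by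
        have : (rI:ℝ) ≤ (r':ℝ) := by exact_mod_cast hrr'
        linarith
      have h3 : (j:ℝ) + 1 ≤ (k':ℝ) := by exact_mod_cast hcase
      have h4 : (0:ℝ) ≤ (k:ℝ) - rI := by
        have : (rI:ℝ) ≤ (k:ℝ) := by exact_mod_cast (by omega : rI ≤ k)
        linarith
      rw [hqR, hjR]
      rw [hjR] at h3
      exact arith_key (by positivity) (by linarith) (by linarith) h4 (by linarith)
    have hk'pos : (0:ℝ) < (k':ℝ) := by exact_mod_cast (by omega : 0 < k')
    have hmain : (k:ℝ) * t ≤ (q:ℝ) * u := by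
      have h1 : (q:ℝ) * ((j:ℝ) * t) ≤ (q:ℝ) * ((k':ℝ) * u) :=
        mul_le_mul_of_nonneg_left hjt (Nat.cast_nonneg q)
      have h2 : ((k:ℝ) * (k':ℝ)) * t ≤ ((q:ℝ) * (j:ℝ)) * t :=
        mul_le_mul_of_nonneg_right hqjR ht0
      have h3 : (k':ℝ) * ((k:ℝ) * t) ≤ (k':ℝ) * ((q:ℝ) * u) := by linarith [h1, h2]
      exact le_of_mul_le_mul_left h3 hk'pos
    have hfinal : (k:ℝ) * t ≤ (q:ℝ) * sortedVal va q :=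
      le_trans hmain (mul_le_mul_of_nonneg_left huq (Nat.cast_nonneg q))
    linarith
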